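/- Let L be a PG-lattice and M a faithful multiplication PG-lattice L-module. Then the expansion function δ₁ on M has the meet preserving property, i.e. δ₁(A ∧ B) = δ₁(A) ∧ δ₁(B) for all A, B ∈ M. -/

import Mathlib

open CompleteLattice

universe u v

/-- A multiplicative lattice: a complete lattice with a commutative, associative
multiplication distributing over arbitrary joins, whose top element is the
multiplicative identity. -/
class MultiplicativeLattice (L : Type u) extends CompleteLattice L, CommMonoid L where
  one_eq_top : (1 : L) = ⊤
  sSup_mul : ∀ (S : Set L) (b : L), sSup S * b = ⨆ a ∈ S, a * b

/-- A lattice module over a multiplicative lattice. -/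
class LatticeModule (L : Type u) [MultiplicativeLattice L] (M : Type v)
    extends CompleteLattice M, SMul L M where
  sSup_smul : ∀ (S : Set L) (A : M), (SupSet.sSup S : L) • A = ⨆ a ∈ S, a • A
  smul_sSup : ∀ (a : L) (S : Set M), a • sSup S = ⨆ B ∈ S, a • B
  mul_smul : ∀ (a b : L) (A : M), (a * b) • A = a • b • A
  one_smul : ∀ A : M, (1 : L) • A = A
  bot_smul : ∀ A : M, (⊥ : L) • A = (⊥ : M)

section LatticeDefs

variable {L : Type u} [MultiplicativeLattice L]

/-- The residual `(a : b)` in `L`. -/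
def lColon (a b : L) : L := sSup {x : L | x * b ≤ a}

/-- The radical `√a` of an element of `L`. -/
def radL (a : L) : L :=
  sSup {x : L | IsCompactElement x ∧ ∃ n : ℕ, 1 ≤ n ∧ x ^ n ≤ a}

/-- A principal element of a multiplicative lattice (meet principal and join principal). -/
def IsPrincipalElemL (e : L) : Prop :=
  (∀ a b : L, a ⊓ b * e = (lColon a e ⊓ b) * e) ∧
  (∀ a b : L, lColon (a * e ⊔ b) e = lColon b e ⊔ a)

/-- An expansion function on `L`. -/
def IsExpansionL (δ : L → L) : Prop :=
  (∀ a : L, a ≤ δ a) ∧ ∀ a b : L, a ≤ b → δ a ≤ δ b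

/-- A 2-absorbing element of `L`. -/
def Is2AbsorbingL (q : L) : Prop :=
  q < ⊤ ∧ ∀ a b c : L, a * b * c ≤ q → a * b ≤ q ∨ b * c ≤ q ∨ c * a ≤ q

/-- A 2-absorbing primary element of `L`. -/
def Is2AbsorbingPrimaryL (q : L) : Prop :=
  q < ⊤ ∧ ∀ a b c : L, a * b * c ≤ q → a * b ≤ q ∨ b * c ≤ radL q ∨ c * a ≤ radL q

/-- A `δL`-primary element of `L`. -/
def IsDeltaLPrimaryL (δL : L → L) (p : L) : Prop :=
  p < ⊤ ∧ ∀ a b : L, a * b ≤ p → a ≤ p ∨ b ≤ δL p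

end LatticeDefs

/-- `L` is a PG-lattice: every element is a join of principal elements. -/
def IsPGLattice (L : Type u) [MultiplicativeLattice L] : Prop :=
  ∀ a : L, a = sSup {e : L | IsPrincipalElemL e ∧ e ≤ a}

section ModuleDefs

variable (L : Type u) {M : Type v} [MultiplicativeLattice L] [LatticeModule L M]

/-- The element `(A : B)` of `L`, for `A B : M`. -/
def mColon (A B : M) : L := sSup {x : L | x • B ≤ A}

/-- The element `(N : a)` of `M`, for `N : M`, `a : L`. -/
def resColon (N : M) (a : L) : M := sSup {X : M | a • X ≤ N}

/-- An expansion function on the `L`-module `M`. -/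
def IsExpansionM (δ : M → M) : Prop :=
  (∀ A : M, A ≤ δ A) ∧ ∀ A B : M, A ≤ B → δ A ≤ δ B

/-- A `δ`-primary element of the `L`-module `M`. -/
def IsDeltaPrimaryM (δ : M → M) (P : M) : Prop :=
  P < ⊤ ∧ ∀ (a : L) (A : M), a • A ≤ P → A ≤ P ∨ a • (⊤ : M) ≤ δ P

/-- A prime element of the `L`-module `M`. -/
def IsPrimeM (P : M) : Prop :=
  P < ⊤ ∧ ∀ (a : L) (A : M), a • A ≤ P → A ≤ P ∨ a • (⊤ : M) ≤ P

/-- A primary element of the `L`-module `M`. -/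
def IsPrimaryM (P : M) : Prop :=
  P < ⊤ ∧ ∀ (a : L) (A : M), a • A ≤ P → A ≤ P ∨ ∃ n : ℕ, 1 ≤ n ∧ a ^ n • (⊤ : M) ≤ P

/-- A principal element of the `L`-module `M` (meet principal and join principal). -/
def IsPrincipalElemM (N : M) : Prop :=
  (∀ (b : L) (B : M), (b ⊓ mColon L B N) • N = b • N ⊓ B) ∧
  (∀ (b : L) (B : M), b ⊔ mColon L B N = mColon L (b • N ⊔ B) N)

/-- A maximal element of the `L`-module `M`. -/
def IsMaximalM (H : M) : Prop :=
  H < ⊤ ∧ ∀ B : M, H ≤ B → B = H ∨ B = ⊤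

/-- A meet prime element of the `L`-module `M`. -/
def IsMeetPrimeM (N : M) : Prop :=
  N < ⊤ ∧ ∀ A B : M, A ⊓ B ≤ N → A ≤ N ∨ B ≤ N

/-- The expansion function `δ₁` on a multiplication `L`-module `M`:
`δ₁(A) = (√(A : I_M)) I_M`. -/
def delta1 (A : M) : M := radL (mColon L A (⊤ : M)) • (⊤ : M)

/-- The expansion function `δ₂`: meet of all maximal elements above a proper element. -/
noncomputable def delta2 (A : M) : M := by
  classical exact if A = ⊤ then ⊤ else sInf {H : M | A ≤ H ∧ IsMaximalM L H}

/-- A 2-absorbing primary element of the `L`-module `M`. -/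
def Is2AbsorbingPrimaryM (Q : M) : Prop :=
  Q < ⊤ ∧ ∀ (a b : L) (N : M), (a * b) • N ≤ Q →
    a * b ≤ mColon L Q (⊤ : M) ∨
    b • N ≤ radL (mColon L Q (⊤ : M)) • (⊤ : M) ∨
    a • N ≤ radL (mColon L Q (⊤ : M)) • (⊤ : M)

/-- A `δL`-primary element of the `L`-module `M`, for an expansion function `δL` on `L`. -/
def IsDeltaLPrimaryM (δL : L → L) (P : M) : Prop :=
  P < ⊤ ∧ ∀ (a : L) (A : M), a • A ≤ P → A ≤ P ∨ a ≤ δL (mColon L P (⊤ : M))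

end ModuleDefs

/-- `M` is a PG-lattice `L`-module: every element is a join of principal elements. -/
def IsPGModule (L : Type u) (M : Type v) [MultiplicativeLattice L] [LatticeModule L M] : Prop :=
  ∀ N : M, N = sSup {E : M | IsPrincipalElemM L E ∧ E ≤ N}

/-- `M` is a multiplication `L`-module. -/
def IsMultiplicationModule (L : Type u) (M : Type v)
    [MultiplicativeLattice L] [LatticeModule L M] : Prop :=
  ∀ N : M, ∃ a : L, N = a • (⊤ : M)

/-- `M` is a faithful `L`-module: `(O_M : I_M) = 0`. -/
def IsFaithfulModule (L : Type u) (M : Type v)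
    [MultiplicativeLattice L] [LatticeModule L M] : Prop :=
  mColon L (⊥ : M) (⊤ : M) = (⊥ : L)

section AuxStmt11

variable {L : Type u} {M : Type v} [MultiplicativeLattice L] [LatticeModule L M]

lemma aux11_one_top : (1 : L) = ⊤ := MultiplicativeLattice.one_eq_top

lemma aux11_le_one (a : L) : a ≤ 1 := by rw [aux11_one_top]; exact le_top

lemma aux11_sup_mul (a b c : L) : (a ⊔ b) * c = a * c ⊔ b * c := by
  have h := MultiplicativeLattice.sSup_mul {a, b} c
  rw [sSup_pair] at h
  rw [h]
  exact iSup_pair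

lemma aux11_mul_sup (a b c : L) : a * (b ⊔ c) = a * b ⊔ a * c := by
  rw [mul_comm a (b ⊔ c), aux11_sup_mul, mul_comm b a, mul_comm c a]

lemma aux11_mul_mono {a b c d : L} (h1 : a ≤ b) (h2 : c ≤ d) : a * c ≤ b * d := by
  have hl : a * c ≤ b * c := by
    have h := aux11_sup_mul a b c
    rw [sup_eq_right.mpr h1] at h
    rw [h]; exact le_sup_left
  refine hl.trans ?_
  have h := aux11_mul_sup b c d
  rw [sup_eq_right.mpr h2] at h
  rw [h]; exact le_sup_left

lemma aux11_mul_le_left (a b : L) : a * b ≤ a := by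
  have := aux11_mul_mono (le_refl a) (aux11_le_one b)
  rwa [mul_one] at this

lemma aux11_mul_le_right (a b : L) : a * b ≤ b := by
  rw [mul_comm]; exact aux11_mul_le_left b a

lemma aux11_sup_smul (a b : L) (A : M) : (a ⊔ b) • A = a • A ⊔ b • A := by
  have h := LatticeModule.sSup_smul {a, b} A
  rw [sSup_pair] at h
  rw [h]
  exact iSup_pair

lemma aux11_smul_sup (a : L) (A B : M) : a • (A ⊔ B) = a • A ⊔ a • B := by
  have h := LatticeModule.smul_sSup a {A, B}
  rw [sSup_pair] at h
  rw [h]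
  exact iSup_pair

lemma aux11_smul_mono_l {a b : L} (h : a ≤ b) (A : M) : a • A ≤ b • A := by
  have hh := aux11_sup_smul a b A
  rw [sup_eq_right.mpr h] at hh
  rw [hh]; exact le_sup_left

lemma aux11_smul_mono_r (a : L) {A B : M} (h : A ≤ B) : a • A ≤ a • B := by
  have hh := aux11_smul_sup a A B
  rw [sup_eq_right.mpr h] at hh
  rw [hh]; exact le_sup_left

lemma aux11_smul_le_self (a : L) (A : M) : a • A ≤ A := by
  have := aux11_smul_mono_l (aux11_le_one a) A
  rwa [LatticeModule.one_smul] at this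

lemma aux11_mColon_smul (B N : M) : (mColon L B N) • N ≤ B := by
  rw [mColon, LatticeModule.sSup_smul]
  exact iSup₂_le fun x hx => hx

lemma aux11_le_mColon {x : L} {B N : M} (h : x • N ≤ B) : x ≤ mColon L B N := le_sSup h

lemma aux11_smul_le_of_le_mColon {x : L} {B N : M} (h : x ≤ mColon L B N) : x • N ≤ B :=
  (aux11_smul_mono_l h N).trans (aux11_mColon_smul B N)

lemma aux11_eq_mColon_smul (hmult : IsMultiplicationModule L M) (A : M) :
    A = mColon L A (⊤ : M) • (⊤ : M) := by
  obtain ⟨a, ha⟩ := hmult A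
  refine le_antisymm ?_ (aux11_mColon_smul A ⊤)
  have haA : a ≤ mColon L A (⊤ : M) := aux11_le_mColon (le_of_eq ha.symm)
  calc A = a • (⊤ : M) := ha
    _ ≤ mColon L A (⊤ : M) • (⊤ : M) := aux11_smul_mono_l haA ⊤

lemma aux11_exists_maximal (h1cpt : IsCompactElement (1 : L)) {K : L} (hK : K ≠ ⊤) :
    ∃ m : L, K ≤ m ∧ m ≠ ⊤ ∧ ∀ x, m ≤ x → x ≠ ⊤ → x = m := by
  have hih : ∀ c ⊆ {a : L | a ≠ ⊤}, IsChain (· ≤ ·) c → ∀ y ∈ c,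
      ∃ ub ∈ {a : L | a ≠ ⊤}, ∀ z ∈ c, z ≤ ub := by
    intro c hcs hchain y hy
    have hmem : sSup c ∈ {a : L | a ≠ ⊤} := by
      simp only [Set.mem_setOf_eq]
      intro htop
      have h1 : (1 : L) ≤ sSup c := by rw [htop]; exact le_top
      obtain ⟨x, hxc, hx1⟩ :=
        (isCompactElement_iff_le_of_directed_sSup_le L (1 : L)).mp h1cpt c ⟨y, hy⟩
          hchain.directedOn h1
      exact hcs hxc (top_unique (by rw [← aux11_one_top]; exact hx1))
    exact ⟨sSup c, hmem, fun z hz => le_sSup hz⟩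
  obtain ⟨m, hKm, hm⟩ := zorn_le_nonempty₀ {a : L | a ≠ ⊤} hih K hK
  exact ⟨m, hKm, hm.prop, fun x hmx hx => le_antisymm (hm.2 hx hmx) hmx⟩

lemma aux11_maximal_prime {m : L} (hm : m ≠ ⊤) (hmax : ∀ x, m ≤ x → x ≠ ⊤ → x = m)
    {p q : L} (hp : ¬ p ≤ m) (hq : ¬ q ≤ m) : ¬ p * q ≤ m := by
  intro hpq
  have hp1 : m ⊔ p = ⊤ := by
    by_contra h
    have := hmax (m ⊔ p) le_sup_left h
    exact hp (by rw [← this]; exact le_sup_right)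
  have hq1 : m ⊔ q = ⊤ := by
    by_contra h
    have := hmax (m ⊔ q) le_sup_left h
    exact hq (by rw [← this]; exact le_sup_right)
  have key : (⊤ : L) ≤ m := by
    have h : (⊤ : L) = (m ⊔ p) * (m ⊔ q) := by
      rw [hp1, hq1, ← aux11_one_top, one_mul]
    rw [h, aux11_sup_mul, aux11_mul_sup, aux11_mul_sup]
    exact sup_le (sup_le (aux11_mul_le_left m m) (aux11_mul_le_left m q))
      (sup_le (aux11_mul_le_right p m) hpq)
  exact hm (le_antisymm le_top key)

lemma aux11_pow_mono {a b : L} (h : a ≤ b) : ∀ n, a ^ n ≤ b ^ n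
  | 0 => by rw [pow_zero, pow_zero]
  | n + 1 => by
      rw [pow_succ, pow_succ]
      exact aux11_mul_mono (aux11_pow_mono h n) h

lemma aux11_sup_pow_aux (u v : L) :
    ∀ k m n : ℕ, m + n ≤ k → (u ⊔ v) ^ (m + n) ≤ u ^ m ⊔ v ^ n := by
  intro k
  induction k with
  | zero =>
    intro m n h
    have hm : m = 0 := by omega
    subst hm
    rw [pow_zero, aux11_one_top, top_sup_eq]
    exact le_top
  | succ k ih =>
    intro m n hmn
    match m, n with
    | 0, n =>
      rw [pow_zero, aux11_one_top, top_sup_eq]; exact le_top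
    | m + 1, 0 =>
      rw [pow_zero, aux11_one_top, sup_top_eq]; exact le_top
    | m + 1, n + 1 =>
      have h1 : (u ⊔ v) ^ ((m + 1) + (n + 1)) = (u ⊔ v) * (u ⊔ v) ^ (m + (n + 1)) := by
        rw [← pow_succ']
        congr 1
        omega
      rw [h1, aux11_sup_mul]
      have hA : u * (u ⊔ v) ^ (m + (n + 1)) ≤ u ^ (m + 1) ⊔ v ^ (n + 1) := by
        calc u * (u ⊔ v) ^ (m + (n + 1)) ≤ u * (u ^ m ⊔ v ^ (n + 1)) :=
              aux11_mul_mono le_rfl (ih m (n + 1) (by omega))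
          _ = u * u ^ m ⊔ u * v ^ (n + 1) := aux11_mul_sup _ _ _
          _ ≤ u ^ (m + 1) ⊔ v ^ (n + 1) := by
              refine sup_le ?_ ((aux11_mul_le_right _ _).trans le_sup_right)
              rw [← pow_succ']
              exact le_sup_left
      have hB : v * (u ⊔ v) ^ (m + (n + 1)) ≤ u ^ (m + 1) ⊔ v ^ (n + 1) := by
        have he : (u ⊔ v) ^ (m + (n + 1)) = (u ⊔ v) ^ ((m + 1) + n) := by congr 1; omega
        calc v * (u ⊔ v) ^ (m + (n + 1)) ≤ v * (u ^ (m + 1) ⊔ v ^ n) := by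
              rw [he]; exact aux11_mul_mono le_rfl (ih (m + 1) n (by omega))
          _ = v * u ^ (m + 1) ⊔ v * v ^ n := aux11_mul_sup _ _ _
          _ ≤ u ^ (m + 1) ⊔ v ^ (n + 1) := by
              refine sup_le ((aux11_mul_le_right _ _).trans le_sup_left) ?_
              rw [← pow_succ']
              exact le_sup_right
      exact sup_le hA hB

lemma aux11_sup_pow (u v : L) (m n : ℕ) : (u ⊔ v) ^ (m + n) ≤ u ^ m ⊔ v ^ n :=
  aux11_sup_pow_aux u v (m + n) m n le_rfl

lemma aux11_bot_compact : IsCompactElement (⊥ : L) :=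
  (isCompactElement_iff_exists_le_sSup_of_le_sSup L _).mpr fun _ _ => ⟨∅, by simp, by simp⟩

lemma aux11_sup_compact {a b : L} (ha : IsCompactElement a) (hb : IsCompactElement b) :
    IsCompactElement (a ⊔ b) := by
  classical
  rw [isCompactElement_iff_exists_le_sSup_of_le_sSup] at ha hb ⊢
  intro s hs
  obtain ⟨t1, ht1s, ht1⟩ := ha s (le_sup_left.trans hs)
  obtain ⟨t2, ht2s, ht2⟩ := hb s (le_sup_right.trans hs)
  refine ⟨t1 ∪ t2, ?_, ?_⟩
  · intro x hx
    rcases Finset.mem_union.mp (by exact_mod_cast hx) with h | h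
    · exact ht1s h
    · exact ht2s h
  · exact sup_le (ht1.trans (Finset.sup_mono Finset.subset_union_left))
      (ht2.trans (Finset.sup_mono Finset.subset_union_right))

lemma aux11_radL_mono {a b : L} (h : a ≤ b) : radL a ≤ radL b :=
  sSup_le_sSup fun x hx => ⟨hx.1, hx.2.choose, hx.2.choose_spec.1, hx.2.choose_spec.2.trans h⟩

lemma aux11_compact_le_radL {x a : L} (hx : IsCompactElement x) (h : x ≤ radL a) :
    ∃ n, 1 ≤ n ∧ x ^ n ≤ a := by
  set R : Set L := {y | IsCompactElement y ∧ ∃ n, 1 ≤ n ∧ y ^ n ≤ a} with hR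
  have hne : R.Nonempty := ⟨⊥, aux11_bot_compact, 1, le_rfl, by rw [pow_one]; exact bot_le⟩
  have hdir : DirectedOn (· ≤ ·) R := by
    rintro y ⟨hyc, ny, hny, hya⟩ z ⟨hzc, nz, hnz, hza⟩
    refine ⟨y ⊔ z, ⟨aux11_sup_compact hyc hzc, ny + nz, by omega, ?_⟩, le_sup_left, le_sup_right⟩
    exact (aux11_sup_pow y z ny nz).trans (sup_le hya hza)
  obtain ⟨y, hyR, hxy⟩ :=
    (isCompactElement_iff_le_of_directed_sSup_le L x).mp hx R hne hdir h
  obtain ⟨-, n, hn, hya⟩ := hyR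
  exact ⟨n, hn, (aux11_pow_mono hxy n).trans hya⟩

lemma aux11_radL_inf [IsCompactlyGenerated L] (a b : L) :
    radL a ⊓ radL b ≤ radL (a ⊓ b) := by
  obtain ⟨s, hsc, hs⟩ := IsCompactlyGenerated.exists_sSup_eq (radL a ⊓ radL b)
  rw [← hs]
  refine sSup_le fun x hx => ?_
  have hxc := hsc x hx
  have hxle : x ≤ radL a ⊓ radL b := by rw [← hs]; exact le_sSup hx
  obtain ⟨n, hn, hna⟩ := aux11_compact_le_radL hxc (hxle.trans inf_le_left)
  obtain ⟨m, hm, hmb⟩ := aux11_compact_le_radL hxc (hxle.trans inf_le_right)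
  refine le_sSup ⟨hxc, n + m, by omega, ?_⟩
  rw [pow_add]
  exact le_inf ((aux11_mul_le_left _ _).trans hna) ((aux11_mul_le_right _ _).trans hmb)

lemma aux11_meet (h1cpt : IsCompactElement (1 : L)) (hPGM : IsPGModule L M)
    (hmult : IsMultiplicationModule L M) (hfaith : IsFaithfulModule L M) (a b : L) :
    a • (⊤ : M) ⊓ b • (⊤ : M) = (a ⊓ b) • (⊤ : M) := by
  refine le_antisymm ?_ (le_inf (aux11_smul_mono_l inf_le_left ⊤)
    (aux11_smul_mono_l inf_le_right ⊤))
  have key : ∀ E : M, IsPrincipalElemM L E → E ≤ a • (⊤ : M) ⊓ b • (⊤ : M) →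
      E ≤ (a ⊓ b) • (⊤ : M) := by
    intro E hE hle
    set K := mColon L ((a ⊓ b) • (⊤ : M)) E with hKdef
    by_cases hK : K = ⊤
    · calc E = (1 : L) • E := (LatticeModule.one_smul E).symm
        _ = K • E := by rw [aux11_one_top, hK]
        _ ≤ (a ⊓ b) • (⊤ : M) := aux11_mColon_smul _ _
    · exfalso
      obtain ⟨m, hKm, hm, hmax⟩ := aux11_exists_maximal h1cpt hK
      by_cases hθ : ∃ W : M, IsPrincipalElemM L W ∧ ¬ mColon L W (⊤ : M) ≤ m
      · obtain ⟨W, hW, hWm⟩ := hθ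
        set q := mColon L W (⊤ : M) with hqdef
        have hqT : q • (⊤ : M) ≤ W := aux11_mColon_smul _ _
        have hqEa : q • E ≤ a • W := by
          calc q • E ≤ q • (a • (⊤ : M)) := aux11_smul_mono_r q (hle.trans inf_le_left)
            _ = (q * a) • (⊤ : M) := (LatticeModule.mul_smul _ _ _).symm
            _ = (a * q) • (⊤ : M) := by rw [mul_comm]
            _ = a • (q • (⊤ : M)) := LatticeModule.mul_smul _ _ _
            _ ≤ a • W := aux11_smul_mono_r a hqT
        have hqEb : q • E ≤ b • W := by
          calc q • E ≤ q • (b • (⊤ : M)) := aux11_smul_mono_r q (hle.trans inf_le_right)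
            _ = (q * b) • (⊤ : M) := (LatticeModule.mul_smul _ _ _).symm
            _ = (b * q) • (⊤ : M) := by rw [mul_comm]
            _ = b • (q • (⊤ : M)) := LatticeModule.mul_smul _ _ _
            _ ≤ b • W := aux11_smul_mono_r b hqT
        set z := mColon L (⊥ : M) W with hzdef
        have hbW : mColon L (b • W) W = b ⊔ z := by
          have h := hW.2 b (⊥ : M)
          rw [sup_bot_eq] at h
          exact h.symm
        have hq : q • E ≤ (a ⊓ (b ⊔ z)) • W := by
          have hmp := hW.1 a (b • W)
          rw [hbW] at hmp
          rw [hmp]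
          exact le_inf hqEa hqEb
        have hqz : q * z = ⊥ := by
          have h1 : (q * z) • (⊤ : M) ≤ (⊥ : M) := by
            calc (q * z) • (⊤ : M) = (z * q) • (⊤ : M) := by rw [mul_comm]
              _ = z • (q • (⊤ : M)) := LatticeModule.mul_smul _ _ _
              _ ≤ z • W := aux11_smul_mono_r z hqT
              _ ≤ ⊥ := aux11_mColon_smul (⊥ : M) W
          have h2 : q * z ≤ mColon L (⊥ : M) (⊤ : M) := aux11_le_mColon h1
          rw [hfaith] at h2
          exact le_bot_iff.mp h2
        have hstep : q * (a ⊓ (b ⊔ z)) ≤ a ⊓ b := by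
          refine le_inf ((aux11_mul_le_right _ _).trans inf_le_left) ?_
          calc q * (a ⊓ (b ⊔ z)) ≤ q * (b ⊔ z) := aux11_mul_mono le_rfl inf_le_right
            _ = q * b ⊔ q * z := aux11_mul_sup _ _ _
            _ = q * b ⊔ ⊥ := by rw [hqz]
            _ ≤ b := by rw [sup_bot_eq]; exact aux11_mul_le_right _ _
        have hq2 : (q * q) • E ≤ (a ⊓ b) • (⊤ : M) := by
          calc (q * q) • E = q • (q • E) := LatticeModule.mul_smul _ _ _
            _ ≤ q • ((a ⊓ (b ⊔ z)) • W) := aux11_smul_mono_r q hq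
            _ = (q * (a ⊓ (b ⊔ z))) • W := (LatticeModule.mul_smul _ _ _).symm
            _ ≤ (a ⊓ b) • W := aux11_smul_mono_l hstep W
            _ ≤ (a ⊓ b) • (⊤ : M) := aux11_smul_mono_r _ le_top
        exact aux11_maximal_prime hm hmax hWm hWm ((aux11_le_mColon hq2).trans hKm)
      · push_neg at hθ
        have hET : E = mColon L E (⊤ : M) • (⊤ : M) := aux11_eq_mColon_smul hmult E
        have hEm : E ≤ m • E := by
          calc E = mColon L E (⊤ : M) • (⊤ : M) := hET
            _ = mColon L E (⊤ : M) • sSup {F : M | IsPrincipalElemM L F ∧ F ≤ (⊤ : M)} := by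
                rw [← hPGM (⊤ : M)]
            _ = ⨆ F ∈ {F : M | IsPrincipalElemM L F ∧ F ≤ (⊤ : M)}, mColon L E (⊤ : M) • F :=
                LatticeModule.smul_sSup _ _
            _ ≤ m • E := by
                refine iSup₂_le fun F hF => ?_
                calc mColon L E (⊤ : M) • F
                    ≤ mColon L E (⊤ : M) • (mColon L F (⊤ : M) • (⊤ : M)) :=
                      aux11_smul_mono_r _ (le_of_eq (aux11_eq_mColon_smul hmult F))
                  _ = (mColon L E (⊤ : M) * mColon L F (⊤ : M)) • (⊤ : M) :=
                      (LatticeModule.mul_smul _ _ _).symm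
                  _ = (mColon L F (⊤ : M) * mColon L E (⊤ : M)) • (⊤ : M) := by rw [mul_comm]
                  _ = mColon L F (⊤ : M) • (mColon L E (⊤ : M) • (⊤ : M)) :=
                      LatticeModule.mul_smul _ _ _
                  _ = mColon L F (⊤ : M) • E := by rw [← hET]
                  _ ≤ m • E := aux11_smul_mono_l (hθ F hF.1) E
        have hEm' : m • E = E := le_antisymm (aux11_smul_le_self m E) hEm
        have hjoin := hE.2 m (⊥ : M)
        have h1le : (⊤ : L) ≤ m ⊔ mColon L (⊥ : M) E := by
          rw [hjoin, sup_bot_eq, hEm']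
          refine aux11_le_mColon ?_
          rw [← aux11_one_top, LatticeModule.one_smul]
        have hzm : ¬ mColon L (⊥ : M) E ≤ m := by
          intro hc
          exact hm (le_antisymm le_top (h1le.trans (sup_le le_rfl hc)))
        apply hzm
        refine le_trans ?_ hKm
        exact aux11_le_mColon ((aux11_mColon_smul (⊥ : M) E).trans bot_le)
  conv_lhs => rw [hPGM (a • (⊤ : M) ⊓ b • (⊤ : M))]
  exact sSup_le fun E hEle => key E hEle.1 hEle.2

end AuxStmt11


theorem stmt11 {L : Type u} {M : Type v} [MultiplicativeLattice L] [LatticeModule L M]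
    [IsCompactlyGenerated L]
    (h1cpt : IsCompactElement (1 : L))
    (hmulcpt : ∀ a b : L, IsCompactElement a → IsCompactElement b → IsCompactElement (a * b))
    (hPGL : IsPGLattice L) (hPGM : IsPGModule L M)
    (hmult : IsMultiplicationModule L M) (hfaith : IsFaithfulModule L M) :
    ∀ A B : M, delta1 L (A ⊓ B) = delta1 L A ⊓ delta1 L B := by
  intro A B
  have hγ : mColon L (A ⊓ B) (⊤ : M) = mColon L A (⊤ : M) ⊓ mColon L B (⊤ : M) := by
    refine le_antisymm (le_inf (aux11_le_mColon ((aux11_mColon_smul _ _).trans inf_le_left))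
      (aux11_le_mColon ((aux11_mColon_smul _ _).trans inf_le_right))) ?_
    refine aux11_le_mColon (le_inf ?_ ?_)
    · exact (aux11_smul_mono_l inf_le_left ⊤).trans (aux11_mColon_smul A ⊤)
    · exact (aux11_smul_mono_l inf_le_right ⊤).trans (aux11_mColon_smul B ⊤)
  show radL (mColon L (A ⊓ B) (⊤ : M)) • (⊤ : M) =
    radL (mColon L A (⊤ : M)) • (⊤ : M) ⊓ radL (mColon L B (⊤ : M)) • (⊤ : M)
  rw [hγ]
  refine le_antisymm (le_inf (aux11_smul_mono_l (aux11_radL_mono inf_le_left) ⊤)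
    (aux11_smul_mono_l (aux11_radL_mono inf_le_right) ⊤)) ?_
  rw [aux11_meet h1cpt hPGM hmult hfaith (radL (mColon L A (⊤ : M))) (radL (mColon L B (⊤ : M)))]
  exact aux11_smul_mono_l (aux11_radL_inf _ _) ⊤
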